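/- Let q be a prime power with q ≡ 1 (mod 4), d = (q-1)/4, g a generator of F_q^*, and 0 ≤ i ≤ d-1. With α = g^(4i+2), define a₀ = (α+1)²/(4α), a₁ = (α²-1)/(4αg^d), a₂ = 1 - a₀, a₃ = -a₁. Then f(x) = a₃x^(3d+1) + a₂x^(2d+1) + a₁x^(d+1) + a₀x satisfies f(f(x)) = x for all x ∈ F_q and has exactly (q+1)/2 fixed points. -/

import Mathlib

theorem stmt7 {F : Type*} [Field F] [Fintype F] (q : ℕ)
    (hq : Fintype.card F = q) (hq4 : q % 4 = 1)
    (d : ℕ) (hd : d = (q - 1) / 4)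
    (g : Fˣ) (hg : ∀ x : Fˣ, x ∈ Subgroup.zpowers g)
    (i : ℕ) (hi : i ≤ d - 1)
    (α a0 a1 a2 a3 : F) (hα : α = (g : F) ^ (4 * i + 2))
    (ha0 : a0 = (α + 1) ^ 2 / (4 * α))
    (ha1 : a1 = (α ^ 2 - 1) / (4 * α * (g : F) ^ d))
    (ha2 : a2 = 1 - a0)
    (ha3 : a3 = -a1)
    (f : F → F)
    (hf : ∀ x, f x = a3 * x ^ (3 * d + 1) + a2 * x ^ (2 * d + 1) +
      a1 * x ^ (d + 1) + a0 * x) :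
    (∀ x, f (f x) = x) ∧ {x : F | f x = x}.ncard = (q + 1) / 2 := by
  classical
  have hq2 : 2 ≤ q := hq ▸ Fintype.one_lt_card
  have hq5 : 5 ≤ q := by omega
  have hqd : q = 4 * d + 1 := by omega
  have hd1 : 1 ≤ d := by omega
  have hgo : orderOf g = q - 1 := by
    rw [orderOf_eq_card_of_forall_mem_zpowers hg, Nat.card_eq_fintype_card, Fintype.card_units, hq]
  have hkey : ∀ n : ℕ, ((g : F) ^ n = 1 ↔ (q - 1) ∣ n) := by
    intro n
    rw [show ((g : F)) ^ n = ((g ^ n : Fˣ) : F) by simp, Units.val_eq_one, ← hgo]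
    exact orderOf_dvd_iff_pow_eq_one.symm
  set s : F := (g : F) ^ d with hsdef
  have hs0 : s ≠ 0 := pow_ne_zero _ (Units.ne_zero g)
  clear_value s
  have hα0 : α ≠ 0 := hα ▸ pow_ne_zero _ (Units.ne_zero g)
  have h2d : (g : F) ^ (2 * d) = -1 := by
    have h1 : ((g : F) ^ (2 * d)) ^ 2 = 1 := by
      rw [← pow_mul]; exact (hkey _).mpr ⟨1, by omega⟩
    have h2 : (g : F) ^ (2 * d) ≠ 1 := by
      intro hone; have hdvd := (hkey _).mp hone
      have := Nat.le_of_dvd (by omega) hdvd; omega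
    rcases sq_eq_one_iff.mp h1 with h | h
    · exact absurd h h2
    · exact h
  have h2dne : (g : F) ^ (2 * d) ≠ 1 := by
    intro hone; have hdvd := (hkey _).mp hone
    have := Nat.le_of_dvd (by omega) hdvd; omega
  have hne : (-1 : F) ≠ 1 := fun h => h2dne (h2d.trans h)
  have hs2 : s ^ 2 = -1 := by rw [hsdef, ← pow_mul, mul_comm]; exact h2d
  have hs3 : s ^ 3 = -s := by
    rw [show (3 : ℕ) = 2 + 1 from rfl, pow_succ, hs2]; ring
  have hα1 : α ≠ 1 := by
    rw [hα]; intro hone; have hdvd := (hkey _).mp hone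
    have := Nat.le_of_dvd (by omega) hdvd; omega
  have hαd : α ^ d = -1 := by
    rw [hα, ← pow_mul, show (4 * i + 2) * d = 2 * d * (2 * i + 1) by ring, pow_mul, h2d]
    exact Odd.neg_one_pow ⟨i, by ring⟩
  have hα1' : α⁻¹ ≠ 1 := fun h => hα1 (by rw [← inv_inv α, h, inv_one])
  have hP1 : a3 * 1 ^ 3 + a2 * 1 ^ 2 + a1 * 1 + a0 = 1 := by rw [ha3, ha2]; ring
  have hPm1 : a3 * (-1) ^ 3 + a2 * (-1) ^ 2 + a1 * (-1) + a0 = 1 := by rw [ha3, ha2]; ring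
  have h2ne : (2 : F) ≠ 0 := fun h => hne (by linear_combination -h)
  have h4ne : (4 : F) ≠ 0 := fun h => h2ne (mul_self_eq_zero.mp (by linear_combination h))
  have h4α : 4 * α ≠ 0 := mul_ne_zero h4ne hα0
  have e0 : a0 * (4 * α) = (α + 1) ^ 2 := by rw [ha0]; field_simp
  have e1 : a1 * (4 * α * s) = α ^ 2 - 1 := by rw [ha1]; field_simp
  have hPs : a3 * s ^ 3 + a2 * s ^ 2 + a1 * s + a0 = α := by
    rw [hs3, hs2, ha3, ha2]
    apply mul_right_cancel₀ h4α
    linear_combination 2 * e1 + 2 * e0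
  have hPms : a3 * (-s) ^ 3 + a2 * (-s) ^ 2 + a1 * (-s) + a0 = α⁻¹ := by
    rw [show (-s) ^ 3 = -(s ^ 3) by ring, hs3, show (-s) ^ 2 = s ^ 2 by ring, hs2,
      neg_neg, ha3, ha2]
    apply mul_right_cancel₀ h4α
    have hinv : α⁻¹ * (4 * α) = 4 := by field_simp
    rw [hinv]
    linear_combination (-2) * e1 + 2 * e0
  have hval : ∀ x : F, f x = x * (a3 * (x ^ d) ^ 3 + a2 * (x ^ d) ^ 2 + a1 * (x ^ d) + a0) := by
    intro x
    rw [hf, show 3 * d + 1 = d * 3 + 1 by ring, show 2 * d + 1 = d * 2 + 1 by ring,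
      pow_succ, pow_succ, pow_succ, pow_mul, pow_mul]
    ring
  have hf0 : f 0 = 0 := by rw [hval, zero_mul]
  have hu4 : ∀ x : F, x ≠ 0 → (x ^ d) ^ 4 = 1 := by
    intro x hx
    rw [← pow_mul, show d * 4 = q - 1 by omega, ← hq]
    exact FiniteField.pow_card_sub_one_eq_one x hx
  have hcases : ∀ x : F, x ≠ 0 → x ^ d = 1 ∨ x ^ d = -1 ∨ x ^ d = s ∨ x ^ d = -s := by
    intro x hx
    have h1 : ((x ^ d) ^ 2) ^ 2 = 1 := by rw [← pow_mul]; exact hu4 x hx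
    rcases sq_eq_one_iff.mp h1 with h | h
    · rcases sq_eq_one_iff.mp h with h' | h'
      · exact Or.inl h'
      · exact Or.inr (Or.inl h')
    · have h0 : (x ^ d - s) * (x ^ d + s) = 0 := by linear_combination h - hs2
      rcases mul_eq_zero.mp h0 with h' | h'
      · exact Or.inr (Or.inr (Or.inl (sub_eq_zero.mp h')))
      · exact Or.inr (Or.inr (Or.inr (eq_neg_of_add_eq_zero_left h')))
  have hfsq : ∀ x : F, x ^ d = 1 ∨ x ^ d = -1 → f x = x := by
    intro x h
    rw [hval]
    rcases h with h | h <;> rw [h]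
    · rw [hP1, mul_one]
    · rw [hPm1, mul_one]
  have hfs : ∀ x : F, x ^ d = s → f x = α * x := by
    intro x h; rw [hval, h, hPs, mul_comm]
  have hfms : ∀ x : F, x ^ d = -s → f x = α⁻¹ * x := by
    intro x h; rw [hval, h, hPms, mul_comm]
  have hprim : IsPrimitiveRoot (g : F) (q - 1) :=
    IsPrimitiveRoot.coe_units_iff.mpr (hgo ▸ IsPrimitiveRoot.orderOf g)
  have hprim2 : IsPrimitiveRoot ((g : F) ^ 2) (2 * d) :=
    hprim.pow (by omega) (by omega)
  constructor
  · intro x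
    by_cases hx : x = 0
    · rw [hx, hf0, hf0]
    rcases hcases x hx with h | h | h | h
    · rw [hfsq x (Or.inl h), hfsq x (Or.inl h)]
    · rw [hfsq x (Or.inr h), hfsq x (Or.inr h)]
    · rw [hfs x h]
      have hd' : (α * x) ^ d = -s := by rw [mul_pow, hαd, h]; ring
      rw [hfms _ hd']
      field_simp
    · rw [hfms x h]
      have hd' : (α⁻¹ * x) ^ d = s := by
        rw [mul_pow, inv_pow, hαd, h]; field_simp
      rw [hfs _ hd']
      field_simp
  · have hset : {x : F | f x = x} = ↑(insert (0 : F) (Polynomial.nthRootsFinset (2 * d) (1 : F))) := by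
      ext x
      simp only [Set.mem_setOf_eq, Finset.coe_insert, Set.mem_insert_iff, Finset.mem_coe,
        Polynomial.mem_nthRootsFinset (by omega : 0 < 2 * d)]
      constructor
      · intro hfx
        by_cases hx : x = 0
        · exact Or.inl hx
        right
        rcases hcases x hx with h | h | h | h
        · rw [show 2 * d = d * 2 by ring, pow_mul, h]; norm_num
        · rw [show 2 * d = d * 2 by ring, pow_mul, h]; norm_num
        · exfalso
          have h1 := hfs x h
          rw [hfx] at h1
          have h2 : (α - 1) * x = 0 := by linear_combination -h1
          rcases mul_eq_zero.mp h2 with h3 | h3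
          · exact hα1 (sub_eq_zero.mp h3)
          · exact hx h3
        · exfalso
          have h1 := hfms x h
          rw [hfx] at h1
          have h2 : (α⁻¹ - 1) * x = 0 := by linear_combination -h1
          rcases mul_eq_zero.mp h2 with h3 | h3
          · exact hα1' (sub_eq_zero.mp h3)
          · exact hx h3
      · intro h
        rcases h with h | h
        · rw [h, hf0]
        · apply hfsq
          have h2 : (x ^ d) ^ 2 = 1 := by rw [← pow_mul, mul_comm]; exact h
          exact sq_eq_one_iff.mp h2
    rw [hset, Set.ncard_coe_finset, Finset.card_insert_of_notMem, hprim2.card_nthRootsFinset]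
    · omega
    · intro hmem
      rw [Polynomial.mem_nthRootsFinset (by omega : 0 < 2 * d),
        zero_pow (by omega : 2 * d ≠ 0)] at hmem
      exact zero_ne_one hmem
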